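/- (Convexity under positive definiteness) If AᵀA − λI is positive definite, then F(x) = (1/2)‖Ax − y‖₂² + λd‖x‖₁ − (λ/2)‖x‖₂² is a strictly convex function on ℝⁿ, and if moreover y = A x̃ with x̃ ∈ {0,±d}^n k-sparse, then x̃ is the global minimizer of F over [-d,d]^n. -/

import Mathlib

open Matrix

lemma quad_eq_17 {m n : ℕ} (A : Matrix (Fin m) (Fin n) ℝ) (lam : ℝ) (v : Fin n → ℝ) :
    dotProduct v ((Aᵀ * A - lam • (1 : Matrix (Fin n) (Fin n) ℝ)).mulVec v)
      = (∑ j, (A.mulVec v j) ^ 2) - lam * ∑ i, (v i) ^ 2 := by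
  rw [Matrix.sub_mulVec, dotProduct_sub, ← Matrix.mulVec_mulVec,
    Matrix.dotProduct_mulVec, Matrix.vecMul_transpose, Matrix.smul_mulVec,
    Matrix.one_mulVec, dotProduct_smul]
  simp [dotProduct, sq, Finset.mul_sum]

theorem stmt_17 (m n k : ℕ) (d lam : ℝ) (hd : 0 < d) (hlam : 0 < lam)
    (A : Matrix (Fin m) (Fin n) ℝ)
    (hpd : ∀ v : Fin n → ℝ, v ≠ 0 →
      0 < dotProduct v ((Aᵀ * A - lam • (1 : Matrix (Fin n) (Fin n) ℝ)).mulVec v))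
    (y : Fin m → ℝ)
    (F : (Fin n → ℝ) → ℝ)
    (hF : ∀ x, F x = (1 / 2) * (∑ j, (A.mulVec x j - y j) ^ 2)
        + lam * d * (∑ i, |x i|) - (lam / 2) * (∑ i, (x i) ^ 2)) :
    StrictConvexOn ℝ Set.univ F ∧
    (∀ xt : Fin n → ℝ, (∀ i, xt i = 0 ∨ xt i = -d ∨ xt i = d) →
      ({i | xt i ≠ 0} : Finset (Fin n)).card ≤ k →
      y = A.mulVec xt →
      ∀ x : Fin n → ℝ, (∀ i, x i ∈ Set.Icc (-d) d) → F xt ≤ F x) := by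
  -- quadratic form positivity
  have hq : ∀ v : Fin n → ℝ, v ≠ 0 →
      0 < (∑ j, (A.mulVec v j) ^ 2) - lam * ∑ i, (v i) ^ 2 := by
    intro v hv
    have := hpd v hv
    rwa [quad_eq_17] at this
  constructor
  · refine ⟨convex_univ, ?_⟩
    intro x _ z _ hxz a b ha hb hab
    have hmv : ∀ j, A.mulVec (a • x + b • z) j = a * A.mulVec x j + b * A.mulVec z j := by
      intro j
      simp [Matrix.mulVec_add, Matrix.mulVec_smul]
    have h1 : ∑ j, (A.mulVec (a • x + b • z) j - y j) ^ 2
        = a * (∑ j, (A.mulVec x j - y j) ^ 2) + b * (∑ j, (A.mulVec z j - y j) ^ 2)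
          - a * b * ∑ j, (A.mulVec x j - A.mulVec z j) ^ 2 := by
      rw [Finset.mul_sum, Finset.mul_sum, Finset.mul_sum, ← Finset.sum_add_distrib,
        ← Finset.sum_sub_distrib]
      refine Finset.sum_congr rfl fun j _ => ?_
      rw [hmv j]
      have : b = 1 - a := by linarith
      subst this; ring
    have h2 : ∑ i, ((a • x + b • z) i) ^ 2
        = a * (∑ i, (x i) ^ 2) + b * (∑ i, (z i) ^ 2)
          - a * b * ∑ i, (x i - z i) ^ 2 := by
      rw [Finset.mul_sum, Finset.mul_sum, Finset.mul_sum, ← Finset.sum_add_distrib,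
        ← Finset.sum_sub_distrib]
      refine Finset.sum_congr rfl fun i _ => ?_
      have : b = 1 - a := by linarith
      subst this; simp; ring
    have h3 : ∑ i, |(a • x + b • z) i| ≤ a * (∑ i, |x i|) + b * (∑ i, |z i|) := by
      rw [Finset.mul_sum, Finset.mul_sum, ← Finset.sum_add_distrib]
      refine Finset.sum_le_sum fun i _ => ?_
      calc |(a • x + b • z) i| = |a * x i + b * z i| := by simp
        _ ≤ |a * x i| + |b * z i| := abs_add_le _ _
        _ = a * |x i| + b * |z i| := by
            rw [abs_mul, abs_mul, abs_of_pos ha, abs_of_pos hb]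
    have hw : (fun i => x i - z i) ≠ 0 := by
      intro h
      apply hxz
      funext i
      have := congrFun h i
      simp at this
      linarith
    have hAw : ∀ j, A.mulVec (fun i => x i - z i) j = A.mulVec x j - A.mulVec z j := by
      intro j
      have : (fun i => x i - z i) = x - z := rfl
      rw [this, Matrix.mulVec_sub]
      simp
    have hqpos := hq _ hw
    simp_rw [hAw] at hqpos
    have hlamd : 0 < lam * d := mul_pos hlam hd
    rw [hF, hF, hF, h1, h2]
    simp only [smul_eq_mul]
    have h3' := mul_le_mul_of_nonneg_left h3 hlamd.le
    nlinarith [mul_pos (mul_pos ha hb) hqpos]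
  · intro xt hxt _ hy x hx
    -- quadratic bound for all v
    have hq' : ∀ v : Fin n → ℝ, lam * ∑ i, (v i) ^ 2 ≤ ∑ j, (A.mulVec v j) ^ 2 := by
      intro v
      by_cases hv : v = 0
      · subst hv; simp
      · linarith [hq v hv]
    have hAw : ∀ j, A.mulVec (fun i => x i - xt i) j = A.mulVec x j - A.mulVec xt j := by
      intro j
      have : (fun i => x i - xt i) = x - xt := rfl
      rw [this, Matrix.mulVec_sub]; simp
    have key := hq' (fun i => x i - xt i)
    simp_rw [hAw] at key
    -- per-coordinate inequality
    have hcoord : ∀ i, 0 ≤ (xt i) ^ 2 - x i * xt i + d * |x i| - d * |xt i| := by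
      intro i
      obtain ⟨hl, hr⟩ := hx i
      rcases hxt i with h | h | h <;> rw [h]
      · simp; positivity
      · rw [abs_of_neg (by linarith : -d < 0)]
        nlinarith [le_abs_self (x i), neg_abs_le (x i)]
      · rw [abs_of_pos hd]
        nlinarith [le_abs_self (x i), neg_abs_le (x i)]
    have hsum : 0 ≤ ∑ i, ((xt i) ^ 2 - x i * xt i + d * |x i| - d * |xt i|) :=
      Finset.sum_nonneg fun i _ => hcoord i
    have hexp : ∑ i, ((xt i) ^ 2 - x i * xt i + d * |x i| - d * |xt i|)
        = (∑ i, (xt i) ^ 2) - (∑ i, x i * xt i) + d * (∑ i, |x i|) - d * (∑ i, |xt i|) := by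
      rw [Finset.mul_sum, Finset.mul_sum, ← Finset.sum_sub_distrib, ← Finset.sum_add_distrib,
        ← Finset.sum_sub_distrib]
    rw [hexp] at hsum
    -- expand (x-xt)^2 sum
    have hsq : ∑ i, (x i - xt i) ^ 2
        = (∑ i, (x i) ^ 2) - 2 * (∑ i, x i * xt i) + (∑ i, (xt i) ^ 2) := by
      rw [Finset.mul_sum, ← Finset.sum_sub_distrib, ← Finset.sum_add_distrib]
      refine Finset.sum_congr rfl fun i _ => by ring
    rw [hsq] at key
    rw [hF, hF, hy]
    have hAxt : ∀ j, A.mulVec xt j - A.mulVec xt j = 0 := fun j => sub_self _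
    simp_rw [hAxt]
    have hsum' := mul_le_mul_of_nonneg_left hsum hlam.le
    simp only [ne_eq, OfNat.ofNat_ne_zero, not_false_eq_true, zero_pow,
      Finset.sum_const_zero, mul_zero]
    nlinarith [hsum', key]
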